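/- Let $k$ be a complete nonarchimedean field, $\Lambda = \mathrm{diag}(\lambda_1, \dots, \lambda_n)$ with $\lambda_i \in k$, $|\lambda_i| = 1$, satisfying the diophantine condition: there are $C > 0$ and $\beta \ge 0$ such that $|\lambda^I - \lambda_j| \ge C |I|^{-\beta}$ for all $j$ and all multi-indices $I$ with $|I| \ge 2$. For $0 < \delta < \rho$ and any $g \in (A^{2}_{\rho}(k^n))^n$, the unique formal solution $w$ of $Lw = g$ (where $(Lw)(x) = w(\Lambda x) - \Lambda w(x)$) satisfies $w \in (A^{2}_{\rho - \delta}(k^n))^n$ with $\|w\|_{\rho - \delta} \le C_1 \frac{\|g\|_{\rho}}{\delta^{\beta}} \rho^{\beta}$ for a constant $C_1$ depending only on $C$, $\beta$ and $\|\Lambda\|$. -/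

import Mathlib

/-- The weighted Gauss norm `‖φ‖_ρ = sup_I ‖a_I‖ ρ^{|I|}` on power series. -/
noncomputable def gaussNorm {K : Type*} [NormedField K] {n : ℕ} (ρ : ℝ)
    (φ : MvPowerSeries (Fin n) K) : ℝ :=
  ⨆ I : Fin n →₀ ℕ, ‖MvPowerSeries.coeff I φ‖ * ρ ^ (I.sum fun _ e => e)

/-- Membership in `A_ρ(Kⁿ)`. -/
def memAρ {K : Type*} [NormedField K] {n : ℕ} (ρ : ℝ)
    (φ : MvPowerSeries (Fin n) K) : Prop :=
  BddAbove (Set.range fun I : Fin n →₀ ℕ =>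
    ‖MvPowerSeries.coeff I φ‖ * ρ ^ (I.sum fun _ e => e))

/-- A power series has only terms of total degree `≥ 2`. -/
def deg2only {K : Type*} [NormedField K] {n : ℕ} (φ : MvPowerSeries (Fin n) K) : Prop :=
  ∀ I : Fin n →₀ ℕ, (I.sum fun _ e => e) ≤ 1 → MvPowerSeries.coeff I φ = 0

/-- The operator `(Lw)(x) = w(Λx) - Λw(x)`, on coefficients
`a_I ↦ (λ^I - λ_j) a_I` in the `j`-th component. -/
noncomputable def homOp {K : Type*} [NormedField K] {n : ℕ} (lam : Fin n → K)
    (w : Fin n → MvPowerSeries (Fin n) K) : Fin n → MvPowerSeries (Fin n) K :=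
  fun j => fun I : Fin n →₀ ℕ =>
    ((∏ i, lam i ^ I i) - lam j) * MvPowerSeries.coeff I (w j)

lemma aux_rpow_le (β : ℝ) (hβ : 0 ≤ β) (x : ℝ) (hx : 0 ≤ x) :
    x ^ β ≤ max 1 (β ^ β) * Real.exp x := by
  rcases eq_or_lt_of_le hβ with h0 | hβpos
  · rw [← h0, Real.rpow_zero]
    have h1 : (1:ℝ) ≤ Real.exp x := Real.one_le_exp hx
    have h2 : (1:ℝ) ≤ max 1 ((0:ℝ) ^ (0:ℝ)) := le_max_left _ _
    nlinarith
  · rcases eq_or_lt_of_le hx with hx0 | hxpos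
    · rw [← hx0, Real.zero_rpow (ne_of_gt hβpos)]
      positivity
    · have h1 : x ^ β = β ^ β * (x / β) ^ β := by
        rw [← Real.mul_rpow (le_of_lt hβpos) (by positivity)]
        congr 1
        field_simp
      have h2 : (x / β) ^ β ≤ Real.exp x := by
        have hlog : Real.log (x / β) ≤ x / β - 1 :=
          Real.log_le_sub_one_of_pos (by positivity)
        calc (x / β) ^ β = Real.exp (Real.log (x / β) * β) := by
              rw [Real.rpow_def_of_pos (by positivity)]
          _ ≤ Real.exp ((x / β - 1) * β) :=
              Real.exp_le_exp.mpr (mul_le_mul_of_nonneg_right hlog hβ)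
          _ ≤ Real.exp x := by
              apply Real.exp_le_exp.mpr
              have : (x / β - 1) * β = x - β := by field_simp
              rw [this]; linarith
      calc x ^ β = β ^ β * (x / β) ^ β := h1
        _ ≤ β ^ β * Real.exp x :=
            mul_le_mul_of_nonneg_left h2 (by positivity)
        _ ≤ max 1 (β ^ β) * Real.exp x :=
            mul_le_mul_of_nonneg_right (le_max_right _ _) (Real.exp_nonneg x)

lemma key_est (β : ℝ) (hβ : 0 ≤ β) {ρ δ : ℝ} (hδ : 0 < δ) (hδρ : δ < ρ) (m : ℕ) :
    (m:ℝ) ^ β * ((ρ - δ)/ρ) ^ m ≤ max 1 (β ^ β) * (ρ/δ) ^ β := by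
  have hρ : 0 < ρ := hδ.trans hδρ
  set s : ℝ := δ / ρ with hs
  have hs0 : 0 < s := by positivity
  have hs1 : s < 1 := by rw [hs, div_lt_one hρ]; exact hδρ
  have hx : (0:ℝ) ≤ (m:ℝ) * s := by positivity
  have ht : (ρ - δ)/ρ = 1 - s := by rw [hs]; field_simp
  have h1 : ((ρ - δ)/ρ) ^ m ≤ Real.exp (-((m:ℝ) * s)) := by
    rw [ht]
    calc (1 - s) ^ m ≤ (Real.exp (-s)) ^ m := by
          apply pow_le_pow_left₀ (by linarith)
          linarith [Real.add_one_le_exp (-s)]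
      _ = Real.exp (-((m:ℝ) * s)) := by
          rw [← Real.exp_nat_mul]; ring_nf
  have h2 : (m:ℝ) ^ β = ((m:ℝ) * s) ^ β * (ρ/δ) ^ β := by
    rw [← Real.mul_rpow hx (by positivity)]
    congr 1
    rw [hs]; field_simp
  have h3 : ((m:ℝ) * s) ^ β ≤ max 1 (β ^ β) * Real.exp ((m:ℝ) * s) :=
    aux_rpow_le β hβ _ hx
  calc (m:ℝ) ^ β * ((ρ - δ)/ρ) ^ m
      ≤ (((m:ℝ) * s) ^ β * (ρ/δ) ^ β) * Real.exp (-((m:ℝ) * s)) := by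
        rw [h2]
        apply mul_le_mul_of_nonneg_left h1
        positivity
    _ ≤ ((max 1 (β ^ β) * Real.exp ((m:ℝ) * s)) * (ρ/δ) ^ β) * Real.exp (-((m:ℝ) * s)) := by
        apply mul_le_mul_of_nonneg_right _ (Real.exp_nonneg _)
        exact mul_le_mul_of_nonneg_right h3 (by positivity)
    _ = max 1 (β ^ β) * (ρ/δ) ^ β := by
        rw [Real.exp_neg]
        field_simp

/-- Small denominators estimate (version of `[HY, Lemma 15]`): if `Λ = diag(λᵢ)` with
`‖λᵢ‖ = 1` satisfies the diophantine condition `‖λ^I - λ_j‖ ≥ C |I|^{-β}` for `|I| ≥ 2`,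
then there is a constant `C₁ > 0` (depending only on `C`, `β` and `‖Λ‖`) such that for
all `0 < δ < ρ` and all `g ∈ (A²_ρ(Kⁿ))ⁿ`, the unique formal solution `w` of `Lw = g`
with components of degree `≥ 2` lies in `(A²_{ρ-δ}(Kⁿ))ⁿ` with
`‖w‖_{ρ-δ} ≤ C₁ ‖g‖_ρ ρ^β / δ^β`. -/
theorem stmt_11 {K : Type*} [NontriviallyNormedField K] [CompleteSpace K]
    [IsUltrametricDist K] {n : ℕ} (lam : Fin n → K)
    (hnorm : ∀ i, ‖lam i‖ = 1)
    (C β : ℝ) (hC : 0 < C) (hβ : 0 ≤ β)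
    (hdioph : ∀ (j : Fin n) (I : Fin n →₀ ℕ), 2 ≤ (I.sum fun _ e => e) →
      C * ((I.sum fun _ e => e : ℕ) : ℝ) ^ (-β) ≤ ‖(∏ i, lam i ^ I i) - lam j‖) :
    ∃ C₁ : ℝ, 0 < C₁ ∧ ∀ ρ δ : ℝ, 0 < δ → δ < ρ →
      ∀ g w : Fin n → MvPowerSeries (Fin n) K,
        (∀ j, deg2only (g j)) → (∀ j, memAρ ρ (g j)) →
        (∀ j, deg2only (w j)) → homOp lam w = g →
        (∀ j, memAρ (ρ - δ) (w j)) ∧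
          ∀ j, gaussNorm (ρ - δ) (w j) ≤ C₁ * gaussNorm ρ (g j) * ρ ^ β / δ ^ β := by
  classical
  set A : ℝ := max 1 (β ^ β) with hA
  have hA1 : (1:ℝ) ≤ A := le_max_left _ _
  refine ⟨A / C, by positivity, ?_⟩
  intro ρ δ hδ hδρ g w hg1 hg2 hw1 hLw
  have hρ : 0 < ρ := hδ.trans hδρ
  have hρδ : 0 < ρ - δ := by linarith
  have hgnn : ∀ j, 0 ≤ gaussNorm ρ (g j) := by
    intro j
    refine le_trans ?_ (le_ciSup (hg2 j) 0)
    positivity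
  set B : Fin n → ℝ := fun j => A / C * gaussNorm ρ (g j) * (ρ/δ) ^ β with hB
  have hBnn : ∀ j, 0 ≤ B j := by
    intro j
    exact mul_nonneg (mul_nonneg (by positivity) (hgnn j)) (by positivity)
  have hbound : ∀ j (I : Fin n →₀ ℕ),
      ‖MvPowerSeries.coeff I (w j)‖ * (ρ - δ) ^ (I.sum fun _ e => e) ≤ B j := by
    intro j I
    set m : ℕ := I.sum fun _ e => e with hm
    by_cases hm1 : m ≤ 1
    · rw [hw1 j I hm1]
      simpa using hBnn j
    · have hm2 : 2 ≤ m := by omega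
      have hc : ((∏ i, lam i ^ I i) - lam j) * MvPowerSeries.coeff I (w j)
          = MvPowerSeries.coeff I (g j) := congrFun (congrFun hLw j) I
      have hD := hdioph j I hm2
      have hmR : (2:ℝ) ≤ (m:ℝ) := by exact_mod_cast hm2
      have hmpos : (0:ℝ) < (m:ℝ) := by linarith
      have hmb : (0:ℝ) < (m:ℝ) ^ β := Real.rpow_pos_of_pos hmpos β
      rw [Real.rpow_neg hmpos.le] at hD
      have hDpos : (0:ℝ) < ‖(∏ i, lam i ^ I i) - lam j‖ :=
        lt_of_lt_of_le (by positivity) hD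
      have heq : ‖(∏ i, lam i ^ I i) - lam j‖ * ‖MvPowerSeries.coeff I (w j)‖
          = ‖MvPowerSeries.coeff I (g j)‖ := by rw [← norm_mul, hc]
      have hnw : ‖MvPowerSeries.coeff I (w j)‖
          ≤ ‖MvPowerSeries.coeff I (g j)‖ * (m:ℝ) ^ β / C := by
        have hD' : C ≤ ‖(∏ i, lam i ^ I i) - lam j‖ * (m:ℝ) ^ β := by
          calc C = C * ((m:ℝ) ^ β)⁻¹ * (m:ℝ) ^ β := by field_simp
            _ ≤ _ := mul_le_mul_of_nonneg_right hD hmb.le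
        rw [le_div_iff₀ hC]
        nlinarith [norm_nonneg (MvPowerSeries.coeff I (w j)),
          norm_nonneg (MvPowerSeries.coeff I (g j)), hD', heq, hmb]
      have hgI : ‖MvPowerSeries.coeff I (g j)‖ * ρ ^ m ≤ gaussNorm ρ (g j) :=
        le_ciSup (hg2 j) I
      have hkey : (m:ℝ) ^ β * ((ρ - δ)/ρ) ^ m ≤ A * (ρ/δ) ^ β :=
        key_est β hβ hδ hδρ m
      calc ‖MvPowerSeries.coeff I (w j)‖ * (ρ - δ) ^ m
          ≤ (‖MvPowerSeries.coeff I (g j)‖ * (m:ℝ) ^ β / C) * (ρ - δ) ^ m :=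
            mul_le_mul_of_nonneg_right hnw (by positivity)
        _ = (1/C) * (‖MvPowerSeries.coeff I (g j)‖ * ρ ^ m)
              * ((m:ℝ) ^ β * ((ρ - δ)/ρ) ^ m) := by
            rw [div_pow]
            field_simp
        _ ≤ (1/C) * gaussNorm ρ (g j) * (A * (ρ/δ) ^ β) := by
            apply mul_le_mul
            · exact mul_le_mul_of_nonneg_left hgI (by positivity)
            · exact hkey
            · exact mul_nonneg (Real.rpow_nonneg hmpos.le β)
                (pow_nonneg (by positivity) m)
            · exact mul_nonneg (by positivity) (hgnn j)
        _ = B j := by rw [hB]; ring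
  refine ⟨fun j => ⟨B j, ?_⟩, fun j => ?_⟩
  · rintro x ⟨I, rfl⟩
    exact hbound j I
  · calc gaussNorm (ρ - δ) (w j) ≤ B j := ciSup_le (hbound j)
      _ = A / C * gaussNorm ρ (g j) * ρ ^ β / δ ^ β := by
        rw [hB, Real.div_rpow hρ.le hδ.le, mul_div_assoc]
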